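/- Fix a prime p not dividing n and a ∈ F_q where q is a power of p. The number of monic irreducible polynomials of degree n over F_q with trace (coefficient of x^{n-1}) equal to a is (1/(q·n)) · Σ_{d | n} μ(d) · q^{n/d}; in particular this count is independent of a. -/

import Mathlib

open Polynomial ArithmeticFunction

noncomputable section Stmt4Aux

namespace Stmt4Aux

open Finset IntermediateField

variable (K : Type) [Field K] [Fintype K]

/-- The polynomial `X^(q^m) - X`. -/
def gpoly (m : ℕ) : K[X] := X ^ (Fintype.card K ^ m) - X

/-- The splitting field of `X^(q^m) - X` over `K`. -/
abbrev L (m : ℕ) : Type := (gpoly K m).SplittingField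

variable {m : ℕ}

lemma gpoly_natDegree (hm : 1 ≤ m) : (gpoly K m).natDegree = Fintype.card K ^ m :=
  FiniteField.X_pow_card_sub_X_natDegree_eq K (Nat.one_lt_pow (by omega) Fintype.one_lt_card)

lemma gpoly_ne_zero (hm : 1 ≤ m) : gpoly K m ≠ 0 :=
  FiniteField.X_pow_card_sub_X_ne_zero K (Nat.one_lt_pow (by omega) Fintype.one_lt_card)

variable {p : ℕ} [CharP K p]

lemma gpoly_separable (hp : p.Prime) (hm : 1 ≤ m) : (gpoly K m).Separable := by
  obtain ⟨e, hpp, he⟩ := FiniteField.card K p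
  exact galois_poly_separable p _ (he ▸ (dvd_pow (dvd_pow_self p e.2.ne') (by omega)))

lemma mem_rootSet_gpoly (hm : 1 ≤ m) (x : L K m) :
    x ∈ (gpoly K m).rootSet (L K m) ↔ x ^ (Fintype.card K ^ m) = x := by
  rw [mem_rootSet_of_ne (gpoly_ne_zero K hm)]
  simp [gpoly, sub_eq_zero]

lemma rootSet_gpoly_eq_univ (hp : p.Prime) (hm : 1 ≤ m) :
    (gpoly K m).rootSet (L K m) = Set.univ := by
  haveI : Fact p.Prime := ⟨hp⟩
  haveI : CharP (L K m) p :=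
    charP_of_injective_algebraMap (algebraMap K (L K m)).injective p
  obtain ⟨e, hpp, he⟩ := FiniteField.card K p
  set S : Subring (L K m) :=
    RingHom.eqLocus (iterateFrobenius (L K m) p (e * m)) (RingHom.id _) with hS
  have hmem : ∀ x : L K m, x ∈ S ↔ x ^ (Fintype.card K ^ m) = x := by
    intro x
    have hpow : p ^ (e * m : ℕ) = Fintype.card K ^ m := by rw [he, pow_mul]
    show iterateFrobenius (L K m) p (e * m) x = RingHom.id _ x ↔ _
    rw [iterateFrobenius_def, hpow, RingHom.id_apply]
  rw [Set.eq_univ_iff_forall]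
  intro x
  have hx : x ∈ (⊤ : Subalgebra K (L K m)) := trivial
  rw [← SplittingField.adjoin_rootSet (gpoly K m), Algebra.mem_adjoin_iff] at hx
  have hsub : Set.range (algebraMap K (L K m)) ∪ (gpoly K m).rootSet (L K m) ⊆ S := by
    rintro y (⟨a, rfl⟩ | hy)
    · rw [SetLike.mem_coe, hmem, ← map_pow, FiniteField.pow_card_pow]
    · rw [SetLike.mem_coe, hmem]
      exact (mem_rootSet_gpoly K hm _).1 hy
  have := (Subring.closure_le (t := S)).2 hsub hx
  rw [hmem] at this
  exact (mem_rootSet_gpoly K hm x).2 this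

instance : Finite (L K m) := Module.finite_of_finite K

noncomputable instance : Fintype (L K m) := Fintype.ofFinite _

lemma card_L (hp : p.Prime) (hm : 1 ≤ m) :
    Fintype.card (L K m) = Fintype.card K ^ m := by
  have key : Fintype.card ((gpoly K m).rootSet (L K m)) = (gpoly K m).natDegree :=
    card_rootSet_eq_natDegree (gpoly_separable K hp hm) (SplittingField.splits _)
  rw [gpoly_natDegree K hm] at key
  have key2 : Nat.card ((gpoly K m).rootSet (L K m)) = Fintype.card K ^ m := by
    rw [Nat.card_eq_fintype_card]; exact key
  rw [rootSet_gpoly_eq_univ K hp hm, Nat.card_univ, Nat.card_eq_fintype_card] at key2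
  exact key2

lemma finrank_L (hp : p.Prime) (hm : 1 ≤ m) :
    Module.finrank K (L K m) = m := by
  have h1 : Fintype.card (L K m) = Fintype.card K ^ Module.finrank K (L K m) :=
    Module.card_eq_pow_finrank
  rw [card_L K hp hm] at h1
  exact (Nat.pow_right_injective Fintype.one_lt_card h1.symm)

variable {K}

lemma dvd_gpoly {f : K[X]} (hmon : f.Monic) (hirr : Irreducible f)
    (hd : f.natDegree ∣ m) : f ∣ gpoly K m := by
  haveI : Fact (Irreducible f) := ⟨hirr⟩
  obtain ⟨k, hk⟩ := hd
  set F := AdjoinRoot f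
  have hf0 : f ≠ 0 := hirr.ne_zero
  let pb := AdjoinRoot.powerBasis hf0
  haveI : Module.Finite K F := Module.Finite.of_basis pb.basis
  haveI : Finite F := Module.finite_of_finite K
  haveI : Fintype F := Fintype.ofFinite _
  have hcard : Fintype.card F = Fintype.card K ^ f.natDegree := by
    rw [Module.card_eq_pow_finrank (K := K) (V := F), pb.finrank, AdjoinRoot.powerBasis_dim]
  have hroot : (Polynomial.aeval (AdjoinRoot.root f)) (gpoly K m) = 0 := by
    simp only [gpoly, map_sub, map_pow, aeval_X, sub_eq_zero]
    rw [hk, pow_mul, ← hcard, FiniteField.pow_card_pow]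
  have := minpoly.dvd K (AdjoinRoot.root f) hroot
  rwa [AdjoinRoot.minpoly_root hf0, hmon.leadingCoeff, inv_one, map_one, mul_one] at this

lemma card_fiber_minpoly (hp : p.Prime) (hm : 1 ≤ m) {f : K[X]} (hmon : f.Monic)
    (hirr : Irreducible f) (hd : f.natDegree ∣ m) :
    Nat.card {x : L K m // minpoly K x = f} = f.natDegree := by
  have hf0 : f ≠ 0 := hirr.ne_zero
  have hsplit : Splits (f.map (algebraMap K (L K m))) :=
    Splits.of_dvd (SplittingField.splits _) (Polynomial.map_ne_zero (gpoly_ne_zero K hm))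
      (Polynomial.map_dvd _ (dvd_gpoly hmon hirr hd))
  have hsep : f.Separable := PerfectField.separable_of_irreducible hirr
  have key : Fintype.card (f.rootSet (L K m)) = f.natDegree :=
    card_rootSet_eq_natDegree hsep hsplit
  rw [← Nat.card_eq_fintype_card] at key
  rw [← key]
  apply Nat.card_congr
  apply Equiv.subtypeEquivRight
  intro x
  rw [mem_rootSet_of_ne hf0]
  constructor
  · rintro rfl; exact minpoly.aeval K x
  · intro hx; exact (minpoly.eq_of_irreducible_of_monic hirr hx hmon).symm

open scoped Classical in
/-- The finset of minimal polynomials of elements of `L K m`. -/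
def T (m : ℕ) : Finset K[X] := (Finset.univ : Finset (L K m)).image (minpoly K)

open scoped Classical in
lemma mem_T (hp : p.Prime) (hm : 1 ≤ m) {f : K[X]} :
    f ∈ T (K := K) m ↔ f.Monic ∧ Irreducible f ∧ f.natDegree ∣ m := by
  constructor
  · intro hf
    obtain ⟨x, -, rfl⟩ := Finset.mem_image.1 hf
    have hint : IsIntegral K x := IsIntegral.of_finite K x
    refine ⟨minpoly.monic hint, minpoly.irreducible hint, ?_⟩
    have hdvd : (minpoly K x).natDegree ∣ Module.finrank K (L K m) := by
      rw [← IntermediateField.adjoin.finrank hint]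
      exact ⟨Module.finrank K⟮x⟯ (L K m), (Module.finrank_mul_finrank K K⟮x⟯ (L K m)).symm⟩
    rwa [finrank_L K hp hm] at hdvd
  · rintro ⟨hmon, hirr, hd⟩
    have hsplit : Splits (f.map (algebraMap K (L K m))) :=
      Splits.of_dvd (SplittingField.splits _) (Polynomial.map_ne_zero (gpoly_ne_zero K hm))
        (Polynomial.map_dvd _ (dvd_gpoly hmon hirr hd))
    obtain ⟨x, hx⟩ := hsplit.exists_eval_eq_zero
      (by rw [degree_map]; exact (degree_pos_of_irreducible hirr).ne')
    rw [eval_map_algebraMap] at hx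
    refine Finset.mem_image.2 ⟨x, Finset.mem_univ _, ?_⟩
    exact (minpoly.eq_of_irreducible_of_monic hirr hx hmon).symm

variable (K) in
/-- The number of monic irreducible polynomials of degree `d` over `K`. -/
def cnt (d : ℕ) : ℕ :=
  Nat.card {f : K[X] // f.Monic ∧ Irreducible f ∧ f.natDegree = d}

open scoped Classical in
lemma cnt_eq (hp : p.Prime) (hm : 1 ≤ m) {d : ℕ} (hd : d ∣ m) :
    cnt K d = ((T (K := K) m).filter (fun f => f.natDegree = d)).card := by
  rw [← Nat.card_eq_finsetCard]
  apply Nat.card_congr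
  apply Equiv.subtypeEquivRight
  intro f
  rw [Finset.mem_filter, mem_T hp hm]
  constructor
  · rintro ⟨h1, h2, rfl⟩; exact ⟨⟨h1, h2, hd⟩, rfl⟩
  · rintro ⟨⟨h1, h2, -⟩, rfl⟩; exact ⟨h1, h2, rfl⟩

lemma key_identity (hp : p.Prime) (hm : 1 ≤ m) :
    ∑ d ∈ m.divisors, (d : ℤ) * cnt K d = (Fintype.card K : ℤ) ^ m := by
  classical
  have h1 : (Finset.univ : Finset (L K m)).card
      = ∑ f ∈ T (K := K) m, ((Finset.univ : Finset (L K m)).filter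
          (fun x => minpoly K x = f)).card :=
    Finset.card_eq_sum_card_fiberwise (fun x _ => Finset.mem_image_of_mem _ (Finset.mem_univ x))
  have h2 : ∑ f ∈ T (K := K) m, ((Finset.univ : Finset (L K m)).filter
      (fun x => minpoly K x = f)).card = ∑ f ∈ T (K := K) m, f.natDegree := by
    refine Finset.sum_congr rfl fun f hf => ?_
    obtain ⟨hmon, hirr, hd⟩ := (mem_T hp hm).1 hf
    rw [← Nat.card_eq_finsetCard, ← card_fiber_minpoly hp hm hmon hirr hd]
    exact Nat.card_congr (Equiv.subtypeEquivRight (fun x => by simp))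
  have h3 : ∑ f ∈ T (K := K) m, f.natDegree
      = ∑ d ∈ m.divisors, ∑ f ∈ (T (K := K) m).filter (fun f => f.natDegree = d),
          f.natDegree := by
    refine (Finset.sum_fiberwise_of_maps_to (fun f hf => ?_) _).symm
    obtain ⟨-, -, hd⟩ := (mem_T hp hm).1 hf
    exact Nat.mem_divisors.2 ⟨hd, by omega⟩
  have h4 : ∀ d ∈ m.divisors, ∑ f ∈ (T (K := K) m).filter (fun f => f.natDegree = d),
      f.natDegree = d * cnt K d := by
    intro d hd
    rw [cnt_eq hp hm (Nat.mem_divisors.1 hd).1]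
    rw [Finset.sum_congr rfl (fun f hf => (Finset.mem_filter.1 hf).2), Finset.sum_const,
      smul_eq_mul, mul_comm]
  have := (card_L K hp hm)
  rw [← Finset.card_univ, h1, h2, h3, Finset.sum_congr rfl h4] at this
  have := congrArg (fun x : ℕ => (x : ℤ)) this
  push_cast at this ⊢
  linarith [this]

lemma moebius_count (hp : p.Prime) {n : ℕ} (hn : 1 ≤ n) :
    (n : ℤ) * cnt K n = ∑ d ∈ n.divisors, (moebius d : ℤ) * (Fintype.card K : ℤ) ^ (n / d) := by
  have H := (sum_eq_iff_sum_mul_moebius_eq (R := ℤ)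
    (f := fun d => (d : ℤ) * cnt K d)
    (g := fun m => (Fintype.card K : ℤ) ^ m)).1
    (fun m hm => key_identity hp hm) n hn
  simp only [Int.cast_id] at H
  rw [← H, Nat.sum_divisorsAntidiagonal (fun d e => (moebius d : ℤ) * (Fintype.card K : ℤ) ^ e)]

lemma comp_X_add_C_cancel (f : K[X]) (c : K) : (f.comp (X + C c)).comp (X + C (-c)) = f := by
  rw [comp_assoc]
  have h : (X + C c).comp (X + C (-c)) = X := by
    rw [add_comp, X_comp, C_comp, add_assoc, ← C_add, neg_add_cancel, C_0, add_zero]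
  rw [h, comp_X]

lemma coeff_comp_X_add_C {f : K[X]} {n : ℕ} (hmon : f.Monic) (hdeg : f.natDegree = n)
    (hn : 1 ≤ n) (c : K) :
    (f.comp (X + C c)).coeff (n - 1) = f.coeff (n - 1) + n * c := by
  have hf : f = ∑ i ∈ Finset.range (n + 1), C (f.coeff i) * X ^ i := by
    conv_lhs => rw [f.as_sum_range_C_mul_X_pow]
    rw [hdeg]
  have hcomp : f.comp (X + C c) = ∑ i ∈ Finset.range (n + 1), C (f.coeff i) * (X + C c) ^ i := by
    conv_lhs => rw [hf]
    simp only [Polynomial.comp, eval₂_finset_sum, eval₂_mul, eval₂_C, eval₂_X_pow]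
  rw [hcomp, finset_sum_coeff]
  simp only [coeff_C_mul, coeff_X_add_C_pow]
  rw [show n + 1 = (n - 1) + 1 + 1 by omega, Finset.sum_range_succ, Finset.sum_range_succ]
  have h0 : ∑ i ∈ Finset.range (n - 1),
      f.coeff i * (c ^ (i - (n - 1)) * ((i.choose (n - 1) : K))) = 0 :=
    Finset.sum_eq_zero fun i hi => by
      rw [Nat.choose_eq_zero_of_lt (Finset.mem_range.1 hi)]
      simp
  rw [h0, zero_add]
  have e1 : n - 1 + 1 = n := by omega
  have e2 : n - (n - 1) = 1 := by omega
  have e3 : n - 1 - (n - 1) = 0 := by omega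
  have hch : (n.choose (n - 1) : K) = n := by
    have : n.choose (n - 1) = n.choose 1 := Nat.choose_symm hn
    rw [this, Nat.choose_one_right]
  have hlead : f.coeff n = 1 := by rw [← hdeg]; exact hmon.coeff_natDegree
  rw [e1, e2, e3, hch, hlead, Nat.choose_self, pow_zero, pow_one]
  push_cast
  ring

lemma step {n : ℕ} (hn : 1 ≤ n) {a : K} (c : K) {f : K[X]}
    (h : f.Monic ∧ Irreducible f ∧ f.natDegree = n ∧ f.coeff (n - 1) = a) :
    (f.comp (X + C c)).Monic ∧ Irreducible (f.comp (X + C c)) ∧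
      (f.comp (X + C c)).natDegree = n ∧ (f.comp (X + C c)).coeff (n - 1) = a + n * c := by
  obtain ⟨hmon, hirr, hdeg, hcoeff⟩ := h
  refine ⟨hmon.comp (monic_X_add_C c) (by rw [natDegree_X_add_C]; exact one_ne_zero), ?_, ?_, ?_⟩
  · have h2 := hirr.map (algEquivAevalXAddC c)
    have h3 : (algEquivAevalXAddC c) f = f.comp (X + C c) := by
      rw [algEquivAevalXAddC_apply, aeval_def, Polynomial.algebraMap_eq]
      rfl
    rwa [h3] at h2
  · rw [natDegree_comp, natDegree_X_add_C, mul_one, hdeg]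
  · rw [coeff_comp_X_add_C hmon hdeg hn c, hcoeff]

lemma card_trace_eq {n : ℕ} (hn : 1 ≤ n) (hnK : (n : K) ≠ 0) (a b : K) :
    Nat.card {f : K[X] // f.Monic ∧ Irreducible f ∧ f.natDegree = n ∧ f.coeff (n - 1) = a}
      = Nat.card {f : K[X] // f.Monic ∧ Irreducible f ∧ f.natDegree = n ∧ f.coeff (n - 1) = b} := by
  set c := (b - a) / (n : K) with hc
  have hab : a + n * c = b := by rw [hc, mul_div_assoc', mul_div_cancel_left₀ _ hnK]; ring
  have hba : b + n * (-c) = a := by rw [← hab]; ring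
  apply Nat.card_congr
  refine ⟨fun f => ⟨f.1.comp (X + C c), hab ▸ step hn c f.2⟩,
          fun f => ⟨f.1.comp (X + C (-c)), hba ▸ step hn (-c) f.2⟩, ?_, ?_⟩
  · intro f
    apply Subtype.ext
    exact comp_X_add_C_cancel f.1 c
  · intro f
    apply Subtype.ext
    have := comp_X_add_C_cancel f.1 (-c)
    rwa [neg_neg] at this

end Stmt4Aux

end Stmt4Aux

/-- For `p ∤ n` and `a` in a finite field of cardinality `q` and characteristic `p`, the
number of monic irreducible polynomials of degree `n` with trace (coefficient of `x^(n-1)`)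
equal to `a` is `(1/(q·n)) · Σ_{d | n} μ(d) q^(n/d)`; in particular it is independent of `a`. -/
theorem stmt4 {K : Type} [Field K] [Fintype K] {p q n : ℕ} (hp : p.Prime) [CharP K p]
    (hq : Fintype.card K = q) (hn : 1 ≤ n) (hpn : ¬ p ∣ n) (a : K) :
    (q * n : ℤ) *
        Nat.card {f : K[X] // f.Monic ∧ Irreducible f ∧ f.natDegree = n ∧ f.coeff (n - 1) = a}
      = ∑ d ∈ n.divisors, (moebius d : ℤ) * (q : ℤ) ^ (n / d) := by
  classical
  subst hq
  have hnK : (n : K) ≠ 0 := by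
    rw [Ne, CharP.cast_eq_zero_iff K p n]
    exact hpn
  have hmoe := Stmt4Aux.moebius_count (K := K) hp hn
  have hsum : Stmt4Aux.cnt K n = Fintype.card K *
      Nat.card {f : K[X] // f.Monic ∧ Irreducible f ∧ f.natDegree = n ∧ f.coeff (n - 1) = a} := by
    rw [Stmt4Aux.cnt_eq (K := K) hp hn dvd_rfl]
    set S := (Stmt4Aux.T (K := K) n).filter (fun f => f.natDegree = n) with hS
    have h1 : S.card = ∑ b ∈ (Finset.univ : Finset K),
        (S.filter (fun f => f.coeff (n - 1) = b)).card :=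
      Finset.card_eq_sum_card_fiberwise (fun f _ => Finset.mem_univ _)
    have h2 : ∀ b : K, (S.filter (fun f => f.coeff (n - 1) = b)).card
        = Nat.card {f : K[X] // f.Monic ∧ Irreducible f ∧ f.natDegree = n
            ∧ f.coeff (n - 1) = b} := by
      intro b
      rw [← Nat.card_eq_finsetCard]
      refine (Nat.card_congr (Equiv.subtypeEquivRight fun f => ?_)).symm
      rw [Finset.mem_filter, hS, Finset.mem_filter, Stmt4Aux.mem_T hp hn]
      constructor
      · rintro ⟨h1', h2', h3', h4'⟩
        exact ⟨⟨⟨h1', h2', h3' ▸ dvd_rfl⟩, h3'⟩, h4'⟩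
      · rintro ⟨⟨⟨h1', h2', -⟩, h3'⟩, h4'⟩
        exact ⟨h1', h2', h3', h4'⟩
    rw [h1, Finset.sum_congr rfl
      (fun b _ => by rw [h2 b, Stmt4Aux.card_trace_eq hn hnK b a]),
      Finset.sum_const, smul_eq_mul, Finset.card_univ]
  rw [hsum] at hmoe
  rw [← hmoe]
  push_cast
  ring
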